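/- Let G be a finite simple connected undirected graph with at least 2 nodes in which every node has degree at most 2. Then for the majority game on G, every singleton set {v} is a sufficient control set. -/

import Mathlib

open Finset

/-- The indicator strategy profile `𝟙_S` of a set of players `S`: action `1` (here `true`)
on `S` and `0` (here `false`) elsewhere. -/
def indicator {V : Type*} [DecidableEq V] (S : Finset V) : V → Bool :=
  fun i => decide (i ∈ S)

/-- A finite binary-action game with utilities `u` is super-modular (has increasing
differences) if for every player `i` and profiles `x, y` with `x_{-i} ≥ y_{-i}`
componentwise, `u_i(1, x_{-i}) − u_i(0, x_{-i}) ≥ u_i(1, y_{-i}) − u_i(0, y_{-i})`. -/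
def Supermodular {V : Type*} [DecidableEq V] (u : V → (V → Bool) → ℝ) : Prop :=
  ∀ (i : V) (x y : V → Bool), (∀ j, j ≠ i → y j ≤ x j) →
    u i (Function.update y i true) - u i (Function.update y i false) ≤
      u i (Function.update x i true) - u i (Function.update x i false)

/-- An improvement path from `S` to `T`: a sequence of profiles starting at `𝟙_S` and ending
at `𝟙_T` such that at each step some player `i ∉ S` flips her action (the profile changes
exactly in coordinate `i`) without decreasing her utility. -/
def IsImprovementPath {V : Type*} [Fintype V] [DecidableEq V]
    (u : V → (V → Bool) → ℝ) (S T : Finset V) : Prop :=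
  ∃ (m : ℕ) (x : ℕ → V → Bool),
    x 0 = indicator S ∧ x m = indicator T ∧
    ∀ k < m, ∃ i, i ∉ S ∧
      x (k + 1) = Function.update (x k) i (!(x k i)) ∧
      u i (x k) ≤ u i (x (k + 1))

/-- `S` is a sufficient control set if there is an improvement path from `S` to the whole
player set `V`. -/
def SufficientControlSet {V : Type*} [Fintype V] [DecidableEq V]
    (u : V → (V → Bool) → ℝ) (S : Finset V) : Prop :=
  IsImprovementPath u S Finset.univ

/-- Utilities of the majority game on a finite simple undirected graph `G`: the utility of
player `i` at profile `x` is the number of neighbors `j` of `i` with `x_j = x_i`. -/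
def majU {V : Type*} [Fintype V] [DecidableEq V] (G : SimpleGraph V) [DecidableRel G.Adj] :
    V → (V → Bool) → ℝ :=
  fun i x => ((G.neighborFinset i).filter (fun j => x j = x i)).card

-- crossing edge
lemma walk_cross {V : Type*} (G : SimpleGraph V) (T : Set V) :
    ∀ {a b : V}, G.Walk a b → a ∈ T → b ∉ T → ∃ i ∉ T, ∃ j ∈ T, G.Adj j i := by
  intro a b w
  induction w with
  | nil => intro h h'; exact absurd h h'
  | @cons a c b h p ih =>
    intro ha hb
    by_cases hc : c ∈ T
    · exact ih hc hb
    · exact ⟨c, hc, a, ha, h⟩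

lemma update_indicator {V : Type*} [DecidableEq V] (T : Finset V) (i : V) :
    Function.update (indicator T) i true = indicator (insert i T) := by
  funext j
  by_cases h : j = i <;> simp [indicator, Function.update, h]

lemma aux_path {V : Type*} [Fintype V] [DecidableEq V]
    (G : SimpleGraph V) [DecidableRel G.Adj]
    (hconn : G.Connected) (hdeg : ∀ v : V, G.degree v ≤ 2) (v : V) :
    ∀ (n : ℕ) (T : Finset V), v ∈ T → (univ \ T).card = n →
    ∃ (m : ℕ) (x : ℕ → V → Bool),
      x 0 = indicator T ∧ x m = indicator (univ : Finset V) ∧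
      ∀ k < m, ∃ i, i ≠ v ∧
        x (k + 1) = Function.update (x k) i (!(x k i)) ∧
        majU G i (x k) ≤ majU G i (x (k + 1)) := by
  intro n
  induction n with
  | zero =>
    intro T hv hT
    have : T = univ := by
      have := card_eq_zero.mp hT
      have : ∀ a : V, a ∈ T := by
        intro a
        by_contra ha
        have : a ∈ univ \ T := by simp [ha]
        simp_all
      exact eq_univ_iff_forall.mpr this
    subst this
    exact ⟨0, fun _ => indicator (univ : Finset V), rfl, rfl, by omega⟩
  | succ n ih =>
    intro T hv hT
    -- find i ∉ T adjacent to some j ∈ T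
    have hne : (univ \ T).Nonempty := card_pos.mp (by omega)
    obtain ⟨b, hb⟩ := hne
    have hb' : b ∉ T := (mem_sdiff.mp hb).2
    obtain ⟨i, hi, j0, hj0, hadj0⟩ :=
      walk_cross G (↑T : Set V) ((hconn v b).some) hv hb'
    have hiT : i ∉ T := hi
    have hiv : i ≠ v := fun h => hi (h ▸ hv)
    -- utility inequality
    have hind_i : indicator T i = false := by simp [indicator, hiT]
    have hstep : majU G i (indicator T) ≤ majU G i (Function.update (indicator T) i (!(indicator T i))) := by
      rw [hind_i]
      simp only [Bool.not_false]
      rw [update_indicator]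
      unfold majU
      have h1 : ((G.neighborFinset i).filter (fun j => indicator T j = indicator T i))
          = (G.neighborFinset i).filter (fun j => j ∉ T) := by
        apply filter_congr
        intro j hj
        simp [indicator, hiT]
      have hii : indicator (insert i T) i = true := by simp [indicator]
      have h2 : ((G.neighborFinset i).filter (fun j => indicator (insert i T) j = indicator (insert i T) i))
          = (G.neighborFinset i).filter (fun j => j ∈ T) := by
        apply filter_congr
        intro j hj
        have hji : j ≠ i := by
          intro h
          rw [h] at hj
          have : G.Adj i i := by simpa using hj
          exact G.loopless.irrefl i this
        simp [hii, indicator, hji]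
      rw [h1, h2]
      have hmem : j0 ∈ (G.neighborFinset i).filter (fun j => j ∈ T) := by
        simp only [mem_filter, SimpleGraph.mem_neighborFinset]
        exact ⟨hadj0.symm, Finset.mem_coe.mp hj0⟩
      have hpos : 1 ≤ ((G.neighborFinset i).filter (fun j => j ∈ T)).card :=
        card_pos.mpr ⟨j0, hmem⟩
      have hsum : ((G.neighborFinset i).filter (fun j => j ∉ T)).card
          + ((G.neighborFinset i).filter (fun j => j ∈ T)).card = G.degree i := by
        rw [← SimpleGraph.card_neighborFinset_eq_degree]
        rw [add_comm]
        exact card_filter_add_card_filter_not (fun j => j ∈ T)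
      have hd := hdeg i
      have : ((G.neighborFinset i).filter (fun j => j ∉ T)).card ≤
          ((G.neighborFinset i).filter (fun j => j ∈ T)).card := by omega
      exact_mod_cast this
    -- recurse on insert i T
    have hcard' : (univ \ insert i T).card = n := by
      have : univ \ insert i T = (univ \ T).erase i := by
        ext a; simp [and_comm, not_or, and_assoc]
      rw [this, card_erase_of_mem (by simp [hiT]), hT]; omega
    have hupd : Function.update (indicator T) i (!(indicator T i)) = indicator (insert i T) := by
      rw [hind_i]; simpa using update_indicator T i
    obtain ⟨m, x, hx0, hxm, hstep'⟩ := ih (insert i T) (mem_insert_of_mem hv) hcard'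
    refine ⟨m + 1, fun k => match k with | 0 => indicator T | k + 1 => x k, rfl, hxm, ?_⟩
    intro k hk
    match k with
    | 0 =>
      refine ⟨i, hiv, ?_, ?_⟩
      · show x 0 = Function.update (indicator T) i (!(indicator T i))
        rw [hx0, hupd]
      · show majU G i (indicator T) ≤ majU G i (x 0)
        rw [hx0, ← hupd]; exact hstep
    | k + 1 =>
      exact hstep' k (by omega)

/-- For the majority game on a finite simple connected undirected graph with at least two
nodes in which every node has degree at most `2`, every singleton set `{v}` is a
sufficient control set. -/
theorem degree_le_two_singleton_sufficient
    {V : Type*} [Fintype V] [DecidableEq V]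
    (G : SimpleGraph V) [DecidableRel G.Adj]
    (hconn : G.Connected) (hcard : 2 ≤ Fintype.card V)
    (hdeg : ∀ v : V, G.degree v ≤ 2) (v : V) :
    SufficientControlSet (majU G) {v} := by
  obtain ⟨m, x, h0, hm, hstep⟩ :=
    aux_path G hconn hdeg v (univ \ ({v} : Finset V)).card {v} (mem_singleton_self v) rfl
  refine ⟨m, x, h0, hm, fun k hk => ?_⟩
  obtain ⟨i, hiv, h1, h2⟩ := hstep k hk
  exact ⟨i, by simpa using hiv, h1, h2⟩
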